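/- Let α be an algebraic integer in an imaginary quadratic field with |α| = 2 such that α/2 is not a root of unity. Then there is no finitely supported probability distribution (X, Y, Z) on C³, supported on the plane x + y − αz = 0, with X, Y, Z all equal in distribution and not almost surely zero. -/

import Mathlib

theorem stmt_17 (α : ℂ) (hint : IsIntegral ℤ α)
    (hquad : (minpoly ℚ α).natDegree = 2) (him : α.im ≠ 0)
    (habs : ‖α‖ = 2)
    (hroot : ¬ ∃ n : ℕ, 0 < n ∧ (α / 2) ^ n = 1) :
    ¬ ∃ (S : Finset (ℂ × ℂ × ℂ)) (w : ℂ × ℂ × ℂ → ℝ),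
      (∀ x ∈ S, 0 < w x) ∧
      (∑ x ∈ S, w x = 1) ∧
      (∀ x ∈ S, x.1 + x.2.1 - α * x.2.2 = 0) ∧
      (∀ y : ℂ,
        ∑ x ∈ S.filter (fun x => x.1 = y), w x =
          ∑ x ∈ S.filter (fun x => x.2.1 = y), w x ∧
        ∑ x ∈ S.filter (fun x => x.2.1 = y), w x =
          ∑ x ∈ S.filter (fun x => x.2.2 = y), w x) ∧
      (∃ x ∈ S, x ≠ 0) := by
  rintro ⟨S, w, hw, hsum, hplane, hmarg, p₀, hp₀S, hp₀ne⟩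
  -- positive sum iff nonempty filter
  have hposiff : ∀ F : Finset (ℂ × ℂ × ℂ), F ⊆ S →
      (0 < ∑ x ∈ F, w x ↔ F.Nonempty) := by
    intro F hFS
    constructor
    · intro h
      rcases F.eq_empty_or_nonempty with rfl | h'
      · simp at h
      · exact h'
    · intro h
      exact Finset.sum_pos (fun x hx => hw x (hFS hx)) h
  -- support of X equals support of Z
  have hAC : ∀ y : ℂ, (∃ p ∈ S, p.1 = y) ↔ (∃ p ∈ S, p.2.2 = y) := by
    intro y
    have e : ∑ x ∈ S.filter (fun x => x.1 = y), w x
        = ∑ x ∈ S.filter (fun x => x.2.2 = y), w x :=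
      (hmarg y).1.trans (hmarg y).2
    constructor
    · rintro ⟨p, hp, hpy⟩
      have h1 : (S.filter (fun x => x.1 = y)).Nonempty :=
        ⟨p, Finset.mem_filter.2 ⟨hp, hpy⟩⟩
      have hp' := (hposiff _ (S.filter_subset _)).2 h1
      rw [e] at hp'
      obtain ⟨q, hq⟩ := (hposiff _ (S.filter_subset _)).1 hp'
      exact ⟨q, (Finset.mem_filter.1 hq).1, (Finset.mem_filter.1 hq).2⟩
    · rintro ⟨p, hp, hpy⟩
      have h1 : (S.filter (fun x => x.2.2 = y)).Nonempty :=
        ⟨p, Finset.mem_filter.2 ⟨hp, hpy⟩⟩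
      have hp' := (hposiff _ (S.filter_subset _)).2 h1
      rw [← e] at hp'
      obtain ⟨q, hq⟩ := (hposiff _ (S.filter_subset _)).1 hp'
      exact ⟨q, (Finset.mem_filter.1 hq).1, (Finset.mem_filter.1 hq).2⟩
  -- support of Y equals support of Z
  have hBC : ∀ y : ℂ, (∃ p ∈ S, p.2.1 = y) ↔ (∃ p ∈ S, p.2.2 = y) := by
    intro y
    have e : ∑ x ∈ S.filter (fun x => x.2.1 = y), w x
        = ∑ x ∈ S.filter (fun x => x.2.2 = y), w x := (hmarg y).2
    constructor
    · rintro ⟨p, hp, hpy⟩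
      have h1 : (S.filter (fun x => x.2.1 = y)).Nonempty :=
        ⟨p, Finset.mem_filter.2 ⟨hp, hpy⟩⟩
      have hp' := (hposiff _ (S.filter_subset _)).2 h1
      rw [e] at hp'
      obtain ⟨q, hq⟩ := (hposiff _ (S.filter_subset _)).1 hp'
      exact ⟨q, (Finset.mem_filter.1 hq).1, (Finset.mem_filter.1 hq).2⟩
    · rintro ⟨p, hp, hpy⟩
      have h1 : (S.filter (fun x => x.2.2 = y)).Nonempty :=
        ⟨p, Finset.mem_filter.2 ⟨hp, hpy⟩⟩
      have hp' := (hposiff _ (S.filter_subset _)).2 h1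
      rw [← e] at hp'
      obtain ⟨q, hq⟩ := (hposiff _ (S.filter_subset _)).1 hp'
      exact ⟨q, (Finset.mem_filter.1 hq).1, (Finset.mem_filter.1 hq).2⟩
  -- the finset of z-coordinates
  set C : Finset ℂ := S.image (fun p => p.2.2) with hC
  have hCmem : ∀ y : ℂ, y ∈ C ↔ ∃ p ∈ S, p.2.2 = y := by
    intro y
    simp [hC, Finset.mem_image]
  have hCne : C.Nonempty := ⟨p₀.2.2, (hCmem _).2 ⟨p₀, hp₀S, rfl⟩⟩
  set M : ℝ := C.sup' hCne (‖·‖) with hM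
  have hZle : ∀ p ∈ S, ‖p.2.2‖ ≤ M :=
    fun p hp => Finset.le_sup' (‖·‖) ((hCmem _).2 ⟨p, hp, rfl⟩)
  have hXle : ∀ p ∈ S, ‖p.1‖ ≤ M := by
    intro p hp
    obtain ⟨q, hq, hq2⟩ := (hAC p.1).1 ⟨p, hp, rfl⟩
    rw [← hq2]; exact hZle q hq
  have hYle : ∀ p ∈ S, ‖p.2.1‖ ≤ M := by
    intro p hp
    obtain ⟨q, hq, hq2⟩ := (hBC p.2.1).1 ⟨p, hp, rfl⟩
    rw [← hq2]; exact hZle q hq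
  have hα2 : ‖α / 2‖ = 1 := by
    rw [norm_div, habs]; norm_num
  -- key closure step
  have key : ∀ z : ℂ, ‖z‖ = M → (∃ p ∈ S, p.2.2 = z) →
      ‖α / 2 * z‖ = M ∧ (∃ p ∈ S, p.2.2 = α / 2 * z) := by
    intro z hzM ⟨p, hp, hpz⟩
    have hplane' := hplane p hp
    have hab : p.1 + p.2.1 = 2 * (α / 2 * z) := by
      rw [← hpz]; linear_combination hplane'
    have huM : ‖α / 2 * z‖ = M := by
      rw [norm_mul, hα2, one_mul, hzM]
    set u : ℂ := α / 2 * z with hu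
    have hbu : p.2.1 = u - (p.1 - u) := by linear_combination hab
    -- parallelogram
    have par : Complex.normSq p.1 + Complex.normSq p.2.1
        = 2 * Complex.normSq u + 2 * Complex.normSq (p.1 - u) := by
      rw [hbu]
      simp only [Complex.normSq_apply, Complex.sub_re, Complex.sub_im]
      ring
    have hM0 : 0 ≤ M := le_trans (norm_nonneg _) (hZle p hp)
    have hsq : ∀ c : ℂ, ‖c‖ ≤ M → Complex.normSq c ≤ M ^ 2 := by
      intro c hc
      rw [← Complex.sq_norm]
      exact pow_le_pow_left₀ (norm_nonneg _) hc 2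
    have h1 : Complex.normSq p.1 ≤ M ^ 2 := hsq _ (hXle p hp)
    have h2 : Complex.normSq p.2.1 ≤ M ^ 2 := hsq _ (hYle p hp)
    have h3 : Complex.normSq u = M ^ 2 := by
      rw [← Complex.sq_norm, huM]
    have h4 : Complex.normSq (p.1 - u) ≤ 0 := by nlinarith [par]
    have h5 : p.1 - u = 0 :=
      Complex.normSq_eq_zero.1 (le_antisymm h4 (Complex.normSq_nonneg _))
    have h6 : p.1 = u := by linear_combination h5
    refine ⟨huM, ?_⟩
    exact (hAC u).1 ⟨p, hp, h6⟩
  -- case on M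
  rcases eq_or_lt_of_le (le_trans (norm_nonneg p₀.2.2) (hZle p₀ hp₀S))
    with hM0 | hMpos
  · -- M = 0 : everything is zero
    have hz : ∀ p ∈ S, p.2.2 = 0 := by
      intro p hp
      have := hZle p hp
      rw [← hM0] at this
      exact norm_eq_zero.1 (le_antisymm this (norm_nonneg _))
    have hx : ∀ p ∈ S, p.1 = 0 := by
      intro p hp
      have := hXle p hp
      rw [← hM0] at this
      exact norm_eq_zero.1 (le_antisymm this (norm_nonneg _))
    have hy : ∀ p ∈ S, p.2.1 = 0 := by
      intro p hp
      have := hYle p hp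
      rw [← hM0] at this
      exact norm_eq_zero.1 (le_antisymm this (norm_nonneg _))
    apply hp₀ne
    have e1 := hx p₀ hp₀S
    have e2 := hy p₀ hp₀S
    have e3 := hz p₀ hp₀S
    exact Prod.ext e1 (Prod.ext e2 e3)
  · -- M > 0 : pigeonhole on orbit of α/2
    obtain ⟨z₀, hz₀C, hz₀M⟩ := Finset.exists_mem_eq_sup' hCne (‖·‖)
    have hz₀abs : ‖z₀‖ = M := hz₀M.symm
    have horb : ∀ n : ℕ, ‖(α / 2) ^ n * z₀‖ = M ∧
        (∃ p ∈ S, p.2.2 = (α / 2) ^ n * z₀) := by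
      intro n
      induction n with
      | zero => simpa [hz₀abs] using (hCmem z₀).1 hz₀C
      | succ n ih =>
        have := key _ ih.1 ih.2
        constructor
        · rw [← this.1]; ring_nf
        · obtain ⟨p, hp, hpe⟩ := this.2
          exact ⟨p, hp, by rw [hpe]; ring⟩
    have hmemC : ∀ n : ℕ, ((α / 2) ^ n * z₀) ∈ C :=
      fun n => (hCmem _).2 (horb n).2
    obtain ⟨n, m, hnm, heq⟩ :=
      Finite.exists_ne_map_eq_of_infinite
        (fun n : ℕ => (⟨(α / 2) ^ n * z₀, hmemC n⟩ : {x // x ∈ C}))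
    have heq' : (α / 2) ^ n * z₀ = (α / 2) ^ m * z₀ := by
      simpa using congrArg Subtype.val heq
    have hz₀ne : z₀ ≠ 0 := by
      intro h
      rw [h, norm_zero] at hz₀abs
      exact absurd hz₀abs.symm (ne_of_gt hMpos)
    have hpow : (α / 2) ^ n = (α / 2) ^ m := mul_right_cancel₀ hz₀ne heq'
    have hα2ne : (α / 2) ≠ 0 := by
      intro h
      rw [h, norm_zero] at hα2
      norm_num at hα2
    rcases lt_or_gt_of_ne hnm with h | h
    · apply hroot
      refine ⟨m - n, by omega, ?_⟩
      have : (α / 2) ^ n * (α / 2) ^ (m - n) = (α / 2) ^ n * 1 := by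
        rw [mul_one, ← pow_add]
        rw [hpow]
        congr 1
        omega
      exact mul_left_cancel₀ (pow_ne_zero n hα2ne) this
    · apply hroot
      refine ⟨n - m, by omega, ?_⟩
      have : (α / 2) ^ m * (α / 2) ^ (n - m) = (α / 2) ^ m * 1 := by
        rw [mul_one, ← pow_add]
        rw [← hpow]
        congr 1
        omega
      exact mul_left_cancel₀ (pow_ne_zero m hα2ne) this
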